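/- Let α < 0 and β < 0 be real numbers and let m ≥ 1 be an integer. If ⌊α⌊βx⌋⌋ ≥ ⌊β⌊αx⌋⌋ holds for all real x, then ⌊(mα)⌊βx⌋⌋ ≥ ⌊β⌊(mα)x⌋⌋ holds for all real x. -/
import Mathlib


theorem symmetry_mul_first (α β : ℝ) (hα : α < 0) (hβ : β < 0) (m : ℤ) (hm : 1 ≤ m)
    (h : ∀ x : ℝ, ⌊α * (⌊β * x⌋ : ℝ)⌋ ≥ ⌊β * (⌊α * x⌋ : ℝ)⌋) :
    ∀ x : ℝ, ⌊((m : ℝ) * α) * (⌊β * x⌋ : ℝ)⌋ ≥ ⌊β * (⌊((m : ℝ) * α) * x⌋ : ℝ)⌋ := by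
  intro x
  have hm0 : (0:ℝ) ≤ (m:ℝ) := by exact_mod_cast le_trans zero_le_one hm
  have e1 : ((m : ℝ) * α) * x = α * ((m:ℝ) * x) := by ring
  have h1 := h ((m:ℝ) * x)
  -- m * ⌊β*x⌋ ≤ ⌊β*(m*x)⌋ as integers
  have key : m * ⌊β * x⌋ ≤ ⌊β * ((m:ℝ) * x)⌋ := by
    apply Int.le_floor.mpr
    push_cast
    calc (m:ℝ) * (⌊β * x⌋:ℝ) ≤ (m:ℝ) * (β * x) :=
          mul_le_mul_of_nonneg_left (Int.floor_le _) hm0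
      _ = β * ((m:ℝ) * x) := by ring
  have keyR : α * (⌊β * ((m:ℝ) * x)⌋:ℝ) ≤ ((m:ℝ) * α) * (⌊β * x⌋:ℝ) := by
    have : ((m * ⌊β * x⌋ : ℤ):ℝ) ≤ ((⌊β * ((m:ℝ) * x)⌋:ℤ):ℝ) := by exact_mod_cast key
    push_cast at this
    nlinarith [this]
  calc ⌊β * (⌊((m : ℝ) * α) * x⌋ : ℝ)⌋
      = ⌊β * (⌊α * ((m:ℝ) * x)⌋ : ℝ)⌋ := by rw [e1]
    _ ≤ ⌊α * (⌊β * ((m:ℝ) * x)⌋ : ℝ)⌋ := h1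
    _ ≤ ⌊((m : ℝ) * α) * (⌊β * x⌋ : ℝ)⌋ := Int.floor_le_floor keyR
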